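/- Let N be a temporal network on vertex set V (|V| = n) with uniform static travel time τ and piecewise-constant capacities with breakpoint set 𝒯 (containing 0, T, T+1), and let critnet(N) = {θ + ℓτ : θ ∈ 𝒯, |ℓ| ≤ n}. Suppose φ is a cut function for TEN(N, T) such that some value φ(i) with i ∈ V lies outside critnet(N). Then the pinned assignments graph G_φ has a connected component C satisfying: C ⊆ V, C ∩ 𝒯 = ∅, and for all i ∈ C and all j ∉ C with an edge between i and j in the underlying network, |φ(i) − φ(j)| ∉ {0, τ}, and for all i ∈ C and θ ∈ 𝒯, |φ(i) − θ| ∉ {0, τ}. -/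

import Mathlib

/-- The relation underlying the pinned assignments graph. -/
def pinnedRel {V : Type} (phi : V → ℤ) (tau : ℤ) (TT : Finset ℤ) :
    V ⊕ ℤ → V ⊕ ℤ → Prop
  | Sum.inl i, Sum.inl j => |phi i - phi j| = 0 ∨ |phi i - phi j| = tau
  | Sum.inl i, Sum.inr θ => θ ∈ TT ∧ (|phi i - θ| = 0 ∨ |phi i - θ| = tau)
  | Sum.inr _, _ => False

/-- The pinned assignments graph `G_φ` on `V ⊕ ℤ` (the `ℤ` part hosting `𝒯`). -/
def pinnedGraph {V : Type} (phi : V → ℤ) (tau : ℤ) (TT : Finset ℤ) :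
    SimpleGraph (V ⊕ ℤ) := SimpleGraph.fromRel (pinnedRel phi tau TT)

lemma countP_left_eq {V : Type} (l : List (V ⊕ ℤ)) :
    l.countP (·.isLeft) = (l.filterMap Sum.getLeft?).length := by
  induction l with
  | nil => simp
  | cons a l ih =>
    cases a <;> simp [List.countP_cons, List.filterMap_cons, ih]

lemma abs_cases' {a τ : ℤ} (hτ : 0 ≤ τ) (h : |a| = 0 ∨ |a| = τ) :
    a = 0 ∨ a = τ ∨ a = -τ := by
  rcases h with h | h
  · left; exact abs_eq_zero.mp h
  · rcases (abs_eq hτ).mp h with h | h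
    · right; left; exact h
    · right; right; exact h

lemma key {V : Type} (φ : V → ℤ) {τ : ℤ} (hτ : 0 ≤ τ) (TT : Finset ℤ)
    {x y : V ⊕ ℤ} (p : (pinnedGraph φ τ TT).Walk x y) :
    ∀ (j : V) (θ : ℤ), x = Sum.inl j → y = Sum.inr θ →
    ∃ θ' ∈ TT, ∃ ℓ : ℤ, |ℓ| ≤ (p.support.countP (·.isLeft) : ℤ) ∧ φ j = θ' + ℓ * τ := by
  induction p with
  | nil =>
    intro j θ h1 h2; subst h1; exact absurd h2 (by simp)
  | @cons x w _ h q ih =>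
    intro j θ hx hy
    subst hx; subst hy
    rw [pinnedGraph, SimpleGraph.fromRel_adj] at h
    have hcount : ((SimpleGraph.Walk.cons h q).support.countP (·.isLeft) : ℤ)
        = q.support.countP (·.isLeft) + 1 := by
      change ((List.countP (fun x : V ⊕ ℤ => x.isLeft) (Sum.inl j :: q.support) : ℕ) : ℤ) = _
      simp [SimpleGraph.Walk.support_cons, List.countP_cons]
    rw [hcount]
    cases w with
    | inl k =>
      have hd : |φ j - φ k| = 0 ∨ |φ j - φ k| = τ := by
        rcases h.2 with h' | h'
        · exact h'
        · rw [abs_sub_comm]; exact h'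
      obtain ⟨θ', hθ', ℓ, hℓ, hk⟩ := ih k θ rfl rfl
      rcases abs_cases' hτ hd with h0 | h1 | h2
      · exact ⟨θ', hθ', ℓ, by omega, by omega⟩
      · refine ⟨θ', hθ', ℓ + 1, ?_, by ring_nf; omega⟩
        have := abs_add_le ℓ 1
        simp at this; omega
      · refine ⟨θ', hθ', ℓ - 1, ?_, by ring_nf; omega⟩
        have := abs_sub ℓ 1
        simp at this; omega
    | inr θ'' =>
      have hrel : pinnedRel φ τ TT (Sum.inl j) (Sum.inr θ'') := by
        rcases h.2 with h' | h'
        · exact h'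
        · exact absurd h' (by simp [pinnedRel])
      obtain ⟨hθ'', hd⟩ := hrel
      have hc : (0 : ℤ) ≤ q.support.countP (·.isLeft) := by positivity
      rcases abs_cases' hτ hd with h0 | h1 | h2
      · exact ⟨θ'', hθ'', 0, by simp; omega, by omega⟩
      · exact ⟨θ'', hθ'', 1, by rw [abs_one]; omega, by omega⟩
      · exact ⟨θ'', hθ'', -1, by rw [abs_neg, abs_one]; omega, by omega⟩

lemma count_le {V : Type} [Fintype V] (l : List (V ⊕ ℤ)) (h : l.Nodup) :
    l.countP (·.isLeft) ≤ Fintype.card V := by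
  rw [countP_left_eq]
  refine List.Nodup.length_le_card ?_
  refine h.filterMap ?_
  intro a a' b hb hb'
  cases a <;> cases a' <;> simp_all

theorem stmt_18 {V : Type} [Fintype V] (n : ℕ) (hn : Fintype.card V = n)
    (E : V → V → Prop) (s d : V) (T τ : ℤ) (hτ : 0 < τ)
    (TT : Finset ℤ) (h0 : (0 : ℤ) ∈ TT) (hTm : T ∈ TT) (hTp : T + 1 ∈ TT)
    (φ : V → ℤ) (hs : φ s = 0) (hd : φ d = T + 1)
    (hrange : ∀ i, 0 ≤ φ i ∧ φ i ≤ T + 1)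
    (hcrit : ∃ i : V, ¬ ∃ θ ∈ TT, ∃ ℓ : ℤ, |ℓ| ≤ (n : ℤ) ∧ φ i = θ + ℓ * τ) :
    ∃ c : (pinnedGraph φ τ TT).ConnectedComponent,
      (∀ θ : ℤ, Sum.inr θ ∉ c.supp) ∧
      (∃ i : V, Sum.inl i ∈ c.supp) ∧
      (∀ i j : V, Sum.inl i ∈ c.supp → Sum.inl j ∉ c.supp → E i j →
        |φ i - φ j| ≠ 0 ∧ |φ i - φ j| ≠ τ) ∧
      (∀ (i : V), ∀ θ ∈ TT, Sum.inl i ∈ c.supp →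
        |φ i - θ| ≠ 0 ∧ |φ i - θ| ≠ τ) := by
  classical
  obtain ⟨i, hi⟩ := hcrit
  have hno : ∀ θ : ℤ,
      Sum.inr θ ∉ ((pinnedGraph φ τ TT).connectedComponentMk (Sum.inl i)).supp := by
    intro θ hθ
    rw [SimpleGraph.ConnectedComponent.mem_supp_iff, SimpleGraph.ConnectedComponent.eq] at hθ
    obtain ⟨w⟩ := hθ.symm
    obtain ⟨θ', hθ', ℓ, hℓ, hφ⟩ := key φ hτ.le TT w.bypass i θ rfl rfl
    have hb : w.bypass.support.countP (·.isLeft) ≤ n := hn ▸ count_le _ w.bypass_isPath.support_nodup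
    exact hi ⟨θ', hθ', ℓ, by omega, hφ⟩
  refine ⟨(pinnedGraph φ τ TT).connectedComponentMk (Sum.inl i), hno, ⟨i, rfl⟩, ?_, ?_⟩
  · intro i' j hi' hj _
    constructor <;> intro heq <;> refine hj ?_ <;>
    · rw [SimpleGraph.ConnectedComponent.mem_supp_iff] at hi' ⊢
      rw [← hi', SimpleGraph.ConnectedComponent.eq]
      have hne : i' ≠ j := by rintro rfl; exact hj ((SimpleGraph.ConnectedComponent.mem_supp_iff _ _).mpr hi')
      refine SimpleGraph.Adj.reachable (SimpleGraph.Adj.symm ?_)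
      rw [pinnedGraph, SimpleGraph.fromRel_adj]
      exact ⟨by simp [hne], Or.inl (by simp [pinnedRel, heq])⟩
  · intro i' θ hθ hi'
    constructor <;> intro heq <;>
    · have : Sum.inr θ ∈ ((pinnedGraph φ τ TT).connectedComponentMk (Sum.inl i)).supp := by
        rw [SimpleGraph.ConnectedComponent.mem_supp_iff] at hi' ⊢
        rw [← hi', SimpleGraph.ConnectedComponent.eq]
        refine SimpleGraph.Adj.reachable (SimpleGraph.Adj.symm ?_)
        rw [pinnedGraph, SimpleGraph.fromRel_adj]
        exact ⟨by simp, Or.inl ⟨hθ, by simp [heq]⟩⟩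
      exact hno θ this
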